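/- (Gaussian sample path envelope) Assume P(A(s,t) > r(t−s) + σ(t−s)^H) ≤ K·e^{−(1/2)(σ/b)²} for all s ≤ t, σ > 0, with K > 0, b > 0, H ∈ (0,1). Then for any μ > 0 and all t, σ > 0: P( sup_{s≤t}{ A(s,t) − (r+μ)(t−s) } > σ ) ≤ L·e^{−(σ/c)^β}, where β = 2(1−H), c = (2b/μ^H)^{1/(1−H)}, and L = e·max{1, 4^H·K·(r/μ + 2 − H)/(H(1−H))}. -/

import Mathlib

set_option maxHeartbeats 4000000

open MeasureTheory Real

lemma half_sq_exp (c z w : ℝ) :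
    (1/2) * ((c * Real.exp z) / Real.exp w) ^ 2 = (c^2/2) * Real.exp (2*(z-w)) := by
  rw [mul_div_assoc, ← Real.exp_sub, mul_pow]
  have h : Real.exp (z - w) ^ 2 = Real.exp (2*(z-w)) := by
    rw [← Real.exp_nat_mul]; norm_num
  rw [h]; ring


lemma geom_natAbs_bound (q : ℝ) (h0 : 0 ≤ q) (h1 : q < 1) (n : ℕ) :
    Summable (fun k : ℕ => q ^ ((k : ℤ) - (n : ℤ)).natAbs) ∧
      (∑' k : ℕ, q ^ ((k : ℤ) - (n : ℤ)).natAbs) ≤ 2 / (1 - q) := by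
  have hsub : 0 < 1 - q := by linarith
  have hgeom : Summable fun i : ℕ => q ^ i := summable_geometric_of_lt_one h0 h1
  have hshift : ∀ i : ℕ, q ^ (((i + n : ℕ) : ℤ) - (n : ℤ)).natAbs = q ^ i := by
    intro i
    congr 1
    have h : ((i + n : ℕ) : ℤ) - (n : ℤ) = (i : ℤ) := by push_cast; ring
    rw [h, Int.natAbs_natCast]
  have hsum : Summable (fun k : ℕ => q ^ ((k : ℤ) - (n : ℤ)).natAbs) := by
    apply (summable_nat_add_iff n).mp
    apply Summable.congr hgeom
    intro i
    exact (hshift i).symm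
  refine ⟨hsum, ?_⟩
  have hdecomp := hsum.sum_add_tsum_nat_add n
  rw [← hdecomp]
  have htail : (∑' i : ℕ, q ^ (((i + n : ℕ) : ℤ) - (n : ℤ)).natAbs) = (1 - q)⁻¹ := by
    rw [tsum_congr hshift]
    exact tsum_geometric_of_lt_one h0 h1
  have hhead : (∑ i ∈ Finset.range n, q ^ ((i : ℤ) - (n : ℤ)).natAbs) ≤ (1 - q)⁻¹ := by
    have hcongr : ∀ i ∈ Finset.range n, q ^ ((i : ℤ) - (n : ℤ)).natAbs = q ^ (n - i) := by
      intro i hi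
      have hi' : i < n := Finset.mem_range.mp hi
      congr 1
      have h : (i : ℤ) - (n : ℤ) = -(((n - i : ℕ) : ℤ)) := by
        push_cast [Nat.cast_sub hi'.le]; ring
      rw [h, Int.natAbs_neg, Int.natAbs_natCast]
    rw [Finset.sum_congr rfl hcongr]
    have hrefl := Finset.sum_range_reflect (fun j => q ^ (j + 1)) n
    have hcongr2 : ∀ j ∈ Finset.range n, q ^ (n - 1 - j + 1) = q ^ (n - j) := by
      intro j hj
      congr 1
      have := Finset.mem_range.mp hj
      omega
    calc (∑ i ∈ Finset.range n, q ^ (n - i))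
        = ∑ j ∈ Finset.range n, q ^ (j + 1) := by
          rw [← hrefl, Finset.sum_congr rfl hcongr2]
      _ ≤ ∑ j ∈ Finset.range n, q ^ j := by
          apply Finset.sum_le_sum
          intro j _
          rw [pow_succ]
          exact mul_le_of_le_one_right (pow_nonneg h0 j) h1.le
      _ ≤ ∑' j : ℕ, q ^ j := hgeom.sum_le_tsum _ (fun i _ => pow_nonneg h0 i)
      _ = (1 - q)⁻¹ := tsum_geometric_of_lt_one h0 h1
  rw [htail]
  have : 2 / (1 - q) = (1 - q)⁻¹ + (1 - q)⁻¹ := by ring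
  linarith

lemma floor_step_bound (c u : ℝ) (hu : 0 < u) (k : ℕ) :
    u * |(k : ℝ) - (⌊c / u⌋₊ : ℕ)| - u ≤ |c - k * u| := by
  have h1 : |c - k * u| = u * |c / u - k| := by
    have he : u * (c / u - k) = c - k * u := by field_simp
    rw [← he, abs_mul, abs_of_pos hu]
  rw [h1]
  have h2 : |(k : ℝ) - (⌊c / u⌋₊ : ℕ)| ≤ |c / u - k| + 1 := by
    rcases lt_or_ge (c / u) 0 with hcu | hcu
    · have hn : ⌊c / u⌋₊ = 0 := Nat.floor_of_nonpos hcu.le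
      rw [hn]
      have h3 : ((k : ℝ)) - ((0 : ℕ) : ℝ) = (k : ℝ) := by norm_num
      rw [h3, abs_of_nonneg (Nat.cast_nonneg k)]
      have h4 : (k : ℝ) - c / u ≤ |c / u - (k : ℝ)| := by
        rw [abs_sub_comm]; exact le_abs_self _
      linarith
    · have hle := Nat.floor_le hcu
      have hlt := Nat.lt_floor_add_one (c / u)
      have h5 : |c / u - (⌊c / u⌋₊ : ℕ)| ≤ 1 := abs_le.mpr ⟨by linarith, by linarith⟩
      calc |(k : ℝ) - (⌊c / u⌋₊ : ℕ)|
          = |((k : ℝ) - c / u) + (c / u - (⌊c / u⌋₊ : ℕ))| := by ring_nf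
        _ ≤ |(k : ℝ) - c / u| + |c / u - (⌊c / u⌋₊ : ℕ)| := abs_add_le _ _
        _ ≤ |c / u - k| + 1 := by rw [abs_sub_comm]; linarith
  nlinarith [mul_le_mul_of_nonneg_left h2 hu.le]



theorem stmt_18 {Ω : Type*} [MeasurableSpace Ω] (P : Measure Ω) [IsProbabilityMeasure P]
    (A : ℝ → Ω → ℝ) (hmono : ∀ ω, Monotone fun t => A t ω)
    (r K b H : ℝ) (hr : 0 ≤ r) (hK : 0 < K) (hb : 0 < b) (hH0 : 0 < H) (hH1 : H < 1)
    (henv : ∀ s t : ℝ, 0 ≤ s → s ≤ t → ∀ σ : ℝ, 0 < σ →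
      (P {ω | A t ω - A s ω > r * (t - s) + σ * (t - s) ^ H}).toReal
        ≤ K * Real.exp (-(1 / 2) * (σ / b) ^ 2))
    (μ : ℝ) (hμ : 0 < μ) (t : ℝ) (ht : 0 ≤ t) (σ : ℝ) (hσ : 0 < σ) :
    (P {ω | σ < ⨆ s : Set.Icc (0 : ℝ) t,
          (A t ω - A (s : ℝ) ω - (r + μ) * (t - (s : ℝ)))}).toReal
      ≤ (Real.exp 1 * max 1 ((4 : ℝ) ^ H * K * (r / μ + 2 - H) / (H * (1 - H)))) *
          Real.exp (-(σ / ((2 * b / μ ^ H) ^ ((1 : ℝ) / (1 - H)))) ^ (2 * (1 - H))) := by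
  have h1H : (0:ℝ) < 1 - H := by linarith
  have hμH : (0:ℝ) < μ ^ H := Real.rpow_pos_of_pos hμ H
  set X : ℝ := (σ ^ (1 - H) * μ ^ H / (2 * b)) ^ 2 with hXdef
  have hXpos : 0 < X := by positivity
  clear_value X
  set M : ℝ := (4 : ℝ) ^ H * K * (r / μ + 2 - H) / (H * (1 - H)) with hMdef
  clear_value M
  have hgoal : (σ / ((2 * b / μ ^ H) ^ ((1 : ℝ) / (1 - H)))) ^ (2 * (1 - H)) = X := by
    have hcb : (0:ℝ) < 2 * b / μ ^ H := by positivity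
    have hc : (0:ℝ) < (2 * b / μ ^ H) ^ ((1 : ℝ) / (1 - H)) := Real.rpow_pos_of_pos hcb _
    have hq : (0:ℝ) < σ / ((2 * b / μ ^ H) ^ ((1 : ℝ) / (1 - H))) := div_pos hσ hc
    rw [hXdef]
    have e1 : (σ / ((2 * b / μ ^ H) ^ ((1 : ℝ) / (1 - H)))) ^ (2 * (1 - H))
        = ((σ / ((2 * b / μ ^ H) ^ ((1 : ℝ) / (1 - H)))) ^ (1 - H)) ^ (2:ℕ) := by
      rw [show (2 : ℝ) * (1 - H) = (1-H) * 2 by ring, Real.rpow_mul hq.le,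
        Real.rpow_two _]
    rw [e1]
    congr 1
    rw [Real.div_rpow hσ.le hc.le, ← Real.rpow_mul hcb.le,
      show (1:ℝ) / (1 - H) * (1 - H) = 1 by field_simp, Real.rpow_one]
    field_simp
  rw [hgoal]
  have hM1 : (1:ℝ) ≤ max 1 M := le_max_left _ _
  -- trivial case X ≤ 1
  rcases le_or_gt X 1 with hX1 | hX1
  · have hPle : (P {ω | σ < ⨆ s : Set.Icc (0 : ℝ) t,
          (A t ω - A (s : ℝ) ω - (r + μ) * (t - (s : ℝ)))}).toReal ≤ 1 := by
      have := ENNReal.toReal_mono (by simp) (prob_le_one (μ := P)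
        (s := {ω | σ < ⨆ s : Set.Icc (0 : ℝ) t,
          (A t ω - A (s : ℝ) ω - (r + μ) * (t - (s : ℝ)))}))
      simpa using this
    have h1 : (1:ℝ) ≤ Real.exp 1 * Real.exp (-X) := by
      rw [← Real.exp_add]
      exact Real.one_le_exp (by linarith)
    calc (P _).toReal ≤ 1 := hPle
      _ ≤ (Real.exp 1 * max 1 M) * Real.exp (-X) := by
          nlinarith [Real.exp_pos (-X), Real.exp_pos (1:ℝ)]
  -- trivial case t = 0
  rcases eq_or_lt_of_le ht with ht0 | ht0
  · have hempty : {ω | σ < ⨆ s : Set.Icc (0 : ℝ) t,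
          (A t ω - A (s : ℝ) ω - (r + μ) * (t - (s : ℝ)))} = ∅ := by
      apply Set.eq_empty_iff_forall_notMem.mpr
      intro ω hω
      simp only [Set.mem_setOf_eq] at hω
      have hne : Nonempty (Set.Icc (0 : ℝ) t) :=
        Set.Nonempty.to_subtype (Set.nonempty_Icc.mpr ht)
      have hconst : ∀ s : Set.Icc (0 : ℝ) t,
          A t ω - A (s : ℝ) ω - (r + μ) * (t - (s : ℝ)) = 0 := by
        intro s
        have hs0 : (s : ℝ) = t := le_antisymm s.2.2 (ht0 ▸ s.2.1)
        rw [hs0]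
        ring
      have : (⨆ s : Set.Icc (0 : ℝ) t,
          (A t ω - A (s : ℝ) ω - (r + μ) * (t - (s : ℝ)))) = 0 := by
        rw [show (fun s : Set.Icc (0 : ℝ) t =>
          (A t ω - A (s : ℝ) ω - (r + μ) * (t - (s : ℝ)))) = fun _ => (0:ℝ) from funext hconst]
        exact ciSup_const
      rw [this] at hω
      linarith
    rw [hempty]
    simp only [measure_empty, ENNReal.toReal_zero]
    have : (0:ℝ) ≤ Real.exp 1 * max 1 M * Real.exp (-X) := by positivity
    linarith
  -- main case
  have h1H : (0:ℝ) < 1 - H := by linarith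
  have hXpos : (0:ℝ) < X := by linarith
  set C : ℝ := r / μ + 2 - H with hCdef
  have hrμ : 0 ≤ r / μ := div_nonneg hr hμ.le
  have hC2H : 2 - H ≤ C := by rw [hCdef]; linarith
  have hC1 : r / μ + 1 ≤ C := by rw [hCdef]; linarith
  have hCpos : 0 < C := by linarith
  clear_value C
  set u : ℝ := 1 / (4 * C * X) with hudef
  have hupos : 0 < u := by rw [hudef]; positivity
  clear_value u
  have hCX1 : 1 ≤ C * X := by nlinarith
  have hu14 : u ≤ 1 / 4 := by
    rw [hudef, div_le_div_iff₀ (by nlinarith) (by norm_num)]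
    nlinarith
  have huμr : u * (μ + r) ≤ μ / 4 := by
    rw [hudef]
    rw [div_mul_eq_mul_div, div_le_div_iff₀ (by nlinarith) (by norm_num)]
    have hCμ : r + μ ≤ C * μ := by
      have h5 : (r / μ + 1) * μ ≤ C * μ := by nlinarith
      calc r + μ = (r / μ + 1) * μ := by field_simp
        _ ≤ C * μ := h5
    nlinarith
  have hexpu : Real.exp u * (1 - u) ≤ 1 := by
    have h := Real.add_one_le_exp (-u)
    have h2 : Real.exp u * Real.exp (-u) = 1 := by rw [← Real.exp_add]; simp
    nlinarith [Real.exp_pos u]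
  have hkeyexp : ((3/4) * μ + r) * Real.exp u ≤ μ + r := by
    have h1u : (0:ℝ) < 1 - u := by linarith
    have h3 : (3/4) * μ + r ≤ (1 - u) * (μ + r) := by nlinarith
    calc ((3/4) * μ + r) * Real.exp u ≤ ((1 - u) * (μ + r)) * Real.exp u :=
          mul_le_mul_of_nonneg_right h3 (Real.exp_pos u).le
      _ = (μ + r) * (Real.exp u * (1 - u)) := by ring
      _ ≤ (μ + r) * 1 := mul_le_mul_of_nonneg_left hexpu (by linarith)
      _ = μ + r := mul_one _
  have hcoef : (3/4) * μ ≤ (r + μ) * Real.exp (-u) - r := by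
    have h := mul_le_mul_of_nonneg_right hkeyexp (Real.exp_pos (-u)).le
    rw [mul_assoc, ← Real.exp_add] at h
    simp only [add_neg_cancel, Real.exp_zero, mul_one] at h
    linarith
  set d : ℕ → ℝ := fun k => t * Real.exp (-(k * u)) with hddef
  have hdpos : ∀ k, 0 < d k := fun k => mul_pos ht0 (Real.exp_pos _)
  have hdt : ∀ k, d k ≤ t := by
    intro k
    have h1 : Real.exp (-((k:ℝ) * u)) ≤ 1 :=
      Real.exp_le_one_iff.mpr (neg_nonpos.mpr (by positivity))
    calc d k = t * Real.exp (-(k * u)) := rfl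
      _ ≤ t * 1 := mul_le_mul_of_nonneg_left h1 ht0.le
      _ = t := mul_one t
  have hdH : ∀ k, (0:ℝ) < (d k) ^ H := fun k => Real.rpow_pos_of_pos (hdpos k) H
  have hdsucc : ∀ k, d (k + 1) = Real.exp (-u) * d k := by
    intro k
    show t * Real.exp (-((k+1 : ℕ) * u)) = Real.exp (-u) * (t * Real.exp (-(k * u)))
    rw [show (-((k+1:ℕ) * u)) = (-u) + (-((k:ℕ) * u)) by push_cast; ring, Real.exp_add]
    ring
  set τ : ℕ → ℝ := fun k => (σ + (r + μ) * d (k+1) - r * d k) / (d k) ^ H with hτdef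
  have hnum : ∀ k, σ + (3/4) * μ * d k ≤ σ + (r + μ) * d (k+1) - r * d k := by
    intro k
    rw [hdsucc k]
    nlinarith [hdpos k, mul_le_mul_of_nonneg_right hcoef (hdpos k).le]
  have hτge : ∀ k, (σ + (3/4) * μ * d k) / (d k) ^ H ≤ τ k := by
    intro k
    exact (div_le_div_iff_of_pos_right (hdH k)).mpr (hnum k)
  have hglb : ∀ k, 0 < (σ + (3/4) * μ * d k) / (d k) ^ H := by
    intro k
    apply div_pos _ (hdH k)
    have := hdpos k
    nlinarith
  have hτpos : ∀ k, 0 < τ k := fun k => lt_of_lt_of_le (hglb k) (hτge k)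
  set sk : ℕ → ℝ := fun k => t - d k with hskdef
  have hsk0 : ∀ k, 0 ≤ sk k := fun k => sub_nonneg.mpr (hdt k)
  have hskt : ∀ k, sk k ≤ t := fun k => by
    have := hdpos k
    show t - d k ≤ t
    linarith
  have htsk : ∀ k, t - sk k = d k := fun k => by show t - (t - d k) = d k; ring
  set E : ℕ → Set Ω := fun k =>
    {ω | A t ω - A (sk k) ω > r * (t - sk k) + τ k * (t - sk k) ^ H} with hEdef
  have hthr : ∀ k, r * (t - sk k) + τ k * (t - sk k) ^ H = σ + (r + μ) * d (k+1) := by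
    intro k
    rw [htsk k]
    show r * d k + (σ + (r + μ) * d (k+1) - r * d k) / (d k) ^ H * (d k) ^ H
        = σ + (r + μ) * d (k+1)
    rw [div_mul_cancel₀ _ (ne_of_gt (hdH k))]
    ring
  clear_value τ
  -- inclusion
  have hsub : {ω | σ < ⨆ s : Set.Icc (0 : ℝ) t,
      (A t ω - A (s : ℝ) ω - (r + μ) * (t - (s : ℝ)))} ⊆ ⋃ k, E k := by
    intro ω hω
    simp only [Set.mem_setOf_eq] at hω
    have hne : Nonempty (Set.Icc (0 : ℝ) t) :=
      Set.Nonempty.to_subtype (Set.nonempty_Icc.mpr ht)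
    obtain ⟨s, hs⟩ := exists_lt_of_lt_ciSup hω
    have hs0 : (0:ℝ) ≤ (s:ℝ) := s.2.1
    have hst : (s:ℝ) ≤ t := s.2.2
    have hdd0 : 0 ≤ t - (s:ℝ) := by linarith
    have hddpos : 0 < t - (s:ℝ) := by
      rcases eq_or_lt_of_le hdd0 with h0 | h0
      · exfalso
        have hseq : (s:ℝ) = t := by linarith
        rw [hseq] at hs
        simp only [sub_self, mul_zero] at hs
        linarith
      · exact h0
    set dd := t - (s:ℝ) with hdddef
    have hAs : A t ω - A (s:ℝ) ω > σ + (r + μ) * dd := by linarith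
    set k : ℕ := ⌊Real.log (t/dd) / u⌋₊ with hkdef
    have hlognn : 0 ≤ Real.log (t/dd) := by
      apply Real.log_nonneg
      rw [le_div_iff₀ hddpos]
      linarith
    have hk1 : (k:ℝ) * u ≤ Real.log (t/dd) := by
      have := Nat.floor_le (div_nonneg hlognn hupos.le)
      calc (k:ℝ) * u ≤ (Real.log (t/dd) / u) * u :=
            mul_le_mul_of_nonneg_right this hupos.le
        _ = Real.log (t/dd) := by field_simp
    have hk2 : Real.log (t/dd) < ((k:ℝ) + 1) * u := by
      have := Nat.lt_floor_add_one (Real.log (t/dd) / u)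
      calc Real.log (t/dd) = (Real.log (t/dd) / u) * u := by field_simp
        _ < ((k:ℝ) + 1) * u := mul_lt_mul_of_pos_right this hupos
    have hddk : dd ≤ d k := by
      have h1 : Real.exp ((k:ℝ) * u) ≤ t / dd := by
        have := Real.exp_le_exp.mpr hk1
        rwa [Real.exp_log (div_pos ht0 hddpos)] at this
      have h2 : dd * Real.exp ((k:ℝ)*u) ≤ t := by
        have h3 := mul_le_mul_of_nonneg_left h1 hddpos.le
        have h4 : dd * (t / dd) = t := by field_simp
        exact h3.trans h4.le
      show dd ≤ t * Real.exp (-((k:ℝ) * u))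
      rw [Real.exp_neg, ← div_eq_mul_inv, le_div_iff₀ (Real.exp_pos _)]
      exact h2
    have hdk1 : d (k+1) ≤ dd := by
      have h1 : t / dd < Real.exp (((k:ℝ)+1) * u) := by
        have h2 := Real.exp_lt_exp.mpr hk2
        rwa [Real.exp_log (div_pos ht0 hddpos)] at h2
      have h2 : t < dd * Real.exp (((k:ℝ)+1) * u) := by
        rw [div_lt_iff₀ hddpos] at h1
        linarith
      show t * Real.exp (-(((k+1:ℕ):ℝ) * u)) ≤ dd
      rw [Real.exp_neg, ← div_eq_mul_inv, div_le_iff₀ (Real.exp_pos _)]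
      push_cast
      linarith
    apply Set.mem_iUnion.mpr
    refine ⟨k, ?_⟩
    show A t ω - A (sk k) ω > r * (t - sk k) + τ k * (t - sk k) ^ H
    rw [hthr k]
    have hAmono : A (sk k) ω ≤ A (s:ℝ) ω := by
      apply hmono ω
      show t - d k ≤ (s:ℝ)
      have : dd = t - (s:ℝ) := rfl
      linarith [hddk]
    have hrμdd : (r + μ) * d (k+1) ≤ (r + μ) * dd :=
      mul_le_mul_of_nonneg_left hdk1 (by linarith)
    linarith [hAs]
  -- per-event probability bound
  have hEbound : ∀ k, (P (E k)).toReal ≤ K * Real.exp (-(1/2) * (τ k / b)^2) :=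
    fun k => henv (sk k) t (hsk0 k) (hskt k) (τ k) (hτpos k)
  clear_value E sk
  -- constants
  set θ : ℝ := min H (1-H) with hθdef
  have hθpos : 0 < θ := lt_min hH0 h1H
  have hθH : θ ≤ H := min_le_left _ _
  have hθ1H : θ ≤ 1 - H := min_le_right _ _
  clear_value θ
  have hl43pos : 0 < Real.log (4/3) := Real.log_pos (by norm_num)
  have h169 : Real.exp (2 * Real.log (4/3)) = 16/9 := by
    rw [two_mul, Real.exp_add, Real.exp_log (by norm_num : (0:ℝ) < 4/3)]; norm_num
  have h916 : Real.exp (-(2 * Real.log (4/3))) = 9/16 := by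
    rw [Real.exp_neg, h169]; norm_num
  have h14 : Real.exp (-(2 * Real.log 2)) = 1/4 := by
    rw [Real.exp_neg, two_mul, Real.exp_add, Real.exp_log two_pos]; norm_num
  set F : ℝ := 2 * Real.exp (-(2 * H * Real.log (4/3))) with hFdef
  clear_value F
  have hFpos : 0 < F := by rw [hFdef]; positivity
  have hF2 : F ≤ 2 := by
    have h1 : Real.exp (-(2 * H * Real.log (4/3))) ≤ 1 :=
      Real.exp_le_one_iff.mpr (by nlinarith)
    rw [hFdef]; linarith
  have hF98 : 9/8 ≤ F := by
    have h1 : Real.exp (-(2*Real.log (4/3))) ≤ Real.exp (-(2*H*Real.log (4/3))) :=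
      Real.exp_le_exp.mpr (by nlinarith)
    rw [hFdef]; rw [h916] at h1; linarith
  have hFlb : 2 - 4*H*Real.log (4/3) ≤ F := by
    have h1 := Real.add_one_le_exp (-(2*H*Real.log (4/3)))
    rw [hFdef]; linarith
  set v : ℝ := θ * F / (2 * C) with hvdef
  clear_value v
  have hvpos : 0 < v := by rw [hvdef]; positivity
  have h3θ : 3 * θ ≤ C := by
    rcases le_total H (1-H) with hc | hc
    · linarith [hθH, hC2H]
    · linarith [hθ1H, hC2H]
  have hv13 : v ≤ 1/3 := by
    rw [hvdef, div_le_iff₀ (by positivity)]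
    nlinarith [hθpos, hF2, h3θ, hCpos]
  set q : ℝ := Real.exp (-v) with hqdef
  have hq0 : 0 ≤ q := (Real.exp_pos _).le
  have hq1 : q < 1 := by
    rw [hqdef]
    exact Real.exp_lt_one_iff.mpr (by linarith)
  clear_value q
  set la : ℝ := 2 * θ * F * X with hladef
  clear_value la
  have hlapos : 0 < la := by rw [hladef]; positivity
  have hlau : la * u = v := by
    rw [hladef, hudef, hvdef]
    field_simp
    ring
  have hXexp : X = Real.exp (2*((1-H)*Real.log σ + H*Real.log μ - Real.log 2 - Real.log b)) := by
    rw [hXdef, Real.rpow_def_of_pos hσ, Real.rpow_def_of_pos hμ,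
      show (2:ℝ)*b = Real.exp (Real.log 2 + Real.log b) by
        rw [Real.exp_add, Real.exp_log two_pos, Real.exp_log hb]]
    rw [← Real.exp_add, ← Real.exp_sub]
    rw [show Real.exp (Real.log σ*(1-H) + Real.log μ*H - (Real.log 2 + Real.log b))^2
        = Real.exp (2*(Real.log σ*(1-H) + Real.log μ*H - (Real.log 2 + Real.log b))) from by
      rw [← Real.exp_nat_mul]; norm_num]
    congr 1; ring
  have hlogd : ∀ k : ℕ, Real.log (d k) = Real.log t - k*u := by
    intro k
    show Real.log (t * Real.exp (-(k*u))) = _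
    rw [Real.log_mul (ne_of_gt ht0) (ne_of_gt (Real.exp_pos _)), Real.log_exp]; ring
  clear_value d
  set cc : ℝ := Real.log μ + Real.log t - Real.log σ - Real.log (4/3) with hccdef
  clear_value cc
  set n : ℕ := ⌊cc/u⌋₊ with hndef
  clear_value n
  -- key exponent bound
  have hkey : ∀ k : ℕ, F*X - v + v * |(k:ℝ) - (n:ℝ)| ≤ (1/2) * (τ k / b)^2 := by
    intro k
    set ℓ' : ℝ := Real.log μ + Real.log (d k) - Real.log σ - Real.log (4/3) with hℓdef
    clear_value ℓ'
    have hgnn : (0:ℝ) ≤ (σ + (3/4)*μ*d k)/(d k)^H := (hglb k).le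
    have hcore : F*X*Real.exp (2*θ*|ℓ'|)
        ≤ (1/2)*((σ + (3/4)*μ*d k)/(d k)^H/b)^2 := by
      rcases le_total 0 ℓ' with hc | hc
      · rw [abs_of_nonneg hc]
        have hstep1 : Real.exp (2*θ*ℓ') ≤ Real.exp (2*(1-H)*ℓ') :=
          Real.exp_le_exp.mpr (by
            have h := mul_le_mul_of_nonneg_right hθ1H hc
            linarith only [h])
        have heq : F*X*Real.exp (2*(1-H)*ℓ')
            = (1/2)*(((3/4)*μ*(d k)^((1:ℝ)-H))/b)^2 := by
          calc F*X*Real.exp (2*(1-H)*ℓ')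
              = 2 * Real.exp (-(2*H*Real.log (4/3))
                  + 2*((1-H)*Real.log σ + H*Real.log μ - Real.log 2 - Real.log b)
                  + 2*(1-H)*ℓ') := by
                rw [hXexp, hFdef, Real.exp_add, Real.exp_add]; ring
            _ = 2 * (Real.exp (-(2*Real.log (4/3))) * (Real.exp (-(2*Real.log 2))
                  * Real.exp (2*((Real.log μ + Real.log (d k)*(1-H)) - Real.log b)))) := by
                rw [← Real.exp_add, ← Real.exp_add]
                congr 1
                rw [hℓdef]; ring
            _ = ((3/4)^2/2) * Real.exp (2*((Real.log μ + Real.log (d k)*(1-H)) - Real.log b)) := by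
                rw [h916, h14]; ring
            _ = (1/2)*(((3/4)*Real.exp (Real.log μ + Real.log (d k)*(1-H)))/Real.exp (Real.log b))^2 :=
                (half_sq_exp _ _ _).symm
            _ = (1/2)*(((3/4)*μ*(d k)^((1:ℝ)-H))/b)^2 := by
                rw [Real.exp_add, Real.exp_log hμ, Real.exp_log hb,
                  ← Real.rpow_def_of_pos (hdpos k)]
                ring_nf
        have hlow : (3/4)*μ*(d k)^((1:ℝ)-H) ≤ (σ + (3/4)*μ*d k)/(d k)^H := by
          rw [Real.rpow_sub (hdpos k), Real.rpow_one,
            show (3:ℝ)/4*μ*(d k/(d k)^H) = (3/4*μ*d k)/(d k)^H from by ring]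
          exact (div_le_div_iff_of_pos_right (hdH k)).mpr (by linarith only [hσ])
        have hlownn : (0:ℝ) ≤ (3/4)*μ*(d k)^((1:ℝ)-H) :=
          mul_nonneg (mul_nonneg (by norm_num) hμ.le) (Real.rpow_nonneg (hdpos k).le _)
        calc F*X*Real.exp (2*θ*ℓ') ≤ F*X*Real.exp (2*(1-H)*ℓ') :=
              mul_le_mul_of_nonneg_left hstep1 (mul_nonneg hFpos.le hXpos.le)
          _ = (1/2)*(((3/4)*μ*(d k)^((1:ℝ)-H))/b)^2 := heq
          _ ≤ (1/2)*((σ + (3/4)*μ*d k)/(d k)^H/b)^2 := by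
              apply mul_le_mul_of_nonneg_left _ (by norm_num)
              apply pow_le_pow_left₀ (div_nonneg hlownn hb.le)
              exact (div_le_div_iff_of_pos_right hb).mpr hlow
      · rw [abs_of_nonpos hc]
        have hstep1 : Real.exp (2*θ*(-ℓ')) ≤ Real.exp (2*H*(-ℓ')) :=
          Real.exp_le_exp.mpr (by
            have h := mul_le_mul_of_nonneg_right hθH (neg_nonneg.mpr hc)
            linarith only [h])
        have heq : F*X*Real.exp (2*H*(-ℓ'))
            = (1/2)*((σ*(d k)^(-H))/b)^2 := by
          calc F*X*Real.exp (2*H*(-ℓ'))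
              = 2 * Real.exp (-(2*H*Real.log (4/3))
                  + 2*((1-H)*Real.log σ + H*Real.log μ - Real.log 2 - Real.log b)
                  + 2*H*(-ℓ')) := by
                rw [hXexp, hFdef, Real.exp_add, Real.exp_add]; ring
            _ = 2 * (Real.exp (-(2*Real.log 2))
                  * Real.exp (2*((Real.log σ + Real.log (d k)*(-H)) - Real.log b))) := by
                rw [← Real.exp_add]
                congr 1
                rw [hℓdef]; ring
            _ = ((1:ℝ)^2/2) * Real.exp (2*((Real.log σ + Real.log (d k)*(-H)) - Real.log b)) := by
                rw [h14]; ring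
            _ = (1/2)*(((1:ℝ)*Real.exp (Real.log σ + Real.log (d k)*(-H)))/Real.exp (Real.log b))^2 :=
                (half_sq_exp _ _ _).symm
            _ = (1/2)*((σ*(d k)^(-H))/b)^2 := by
                rw [Real.exp_add, Real.exp_log hσ, Real.exp_log hb,
                  ← Real.rpow_def_of_pos (hdpos k)]
                ring_nf
        have hlow : σ*(d k)^(-H) ≤ (σ + (3/4)*μ*d k)/(d k)^H := by
          rw [Real.rpow_neg (hdpos k).le, ← div_eq_mul_inv]
          exact (div_le_div_iff_of_pos_right (hdH k)).mpr
            (by nlinarith only [hdpos k, hμ, hσ])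
        have hlownn : (0:ℝ) ≤ σ*(d k)^(-H) :=
          mul_nonneg hσ.le (Real.rpow_nonneg (hdpos k).le _)
        calc F*X*Real.exp (2*θ*(-ℓ')) ≤ F*X*Real.exp (2*H*(-ℓ')) :=
              mul_le_mul_of_nonneg_left hstep1 (mul_nonneg hFpos.le hXpos.le)
          _ = (1/2)*((σ*(d k)^(-H))/b)^2 := heq
          _ ≤ (1/2)*((σ + (3/4)*μ*d k)/(d k)^H/b)^2 := by
              apply mul_le_mul_of_nonneg_left _ (by norm_num)
              apply pow_le_pow_left₀ (div_nonneg hlownn hb.le)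
              exact (div_le_div_iff_of_pos_right hb).mpr hlow
    have habs2 : |ℓ'| = |cc - (k:ℝ)*u| := by
      rw [hℓdef, hccdef, hlogd k]
      congr 1
      ring
    have hfloor := floor_step_bound cc u hupos k
    rw [← hndef] at hfloor
    have hchain : F*X - v + v*|(k:ℝ) - (n:ℝ)| ≤ F*X*(1 + 2*θ*|ℓ'|) := by
      have h1 : v*|(k:ℝ)-(n:ℝ)| - v ≤ la*|ℓ'| := by
        rw [habs2, ← hlau]
        calc la*u*|(k:ℝ)-(n:ℝ)| - la*u = la*(u*|(k:ℝ)-(n:ℝ)| - u) := by ring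
          _ ≤ la*|cc - (k:ℝ)*u| := mul_le_mul_of_nonneg_left hfloor hlapos.le
      have h2 : F*X*(1 + 2*θ*|ℓ'|) = F*X + la*|ℓ'| := by rw [hladef]; ring
      linarith only [h1, h2]
    have hexp_lb : F*X*(1 + 2*θ*|ℓ'|) ≤ F*X*Real.exp (2*θ*|ℓ'|) := by
      apply mul_le_mul_of_nonneg_left _ (mul_nonneg hFpos.le hXpos.le)
      linarith only [Real.add_one_le_exp (2*θ*|ℓ'|)]
    have hsq : (1/2)*((σ + (3/4)*μ*d k)/(d k)^H/b)^2 ≤ (1/2)*(τ k/b)^2 := by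
      apply mul_le_mul_of_nonneg_left _ (by norm_num)
      apply pow_le_pow_left₀ (div_nonneg hgnn hb.le)
      exact (div_le_div_iff_of_pos_right hb).mpr (hτge k)
    linarith only [hchain, hexp_lb, hcore, hsq]
  -- geometric envelope per term
  have hterm : ∀ k : ℕ, K * Real.exp (-(1/2) * (τ k / b)^2)
      ≤ (K * Real.exp (-(F*X) + v)) * q ^ ((k:ℤ) - (n:ℤ)).natAbs := by
    intro k
    have h2 : -(1/2) * (τ k / b)^2 ≤ -(F*X - v + v*|(k:ℝ)-(n:ℝ)|) := by
      linarith only [hkey k]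
    have h3 : Real.exp (-(1/2) * (τ k / b)^2)
        ≤ Real.exp (-(F*X - v + v*|(k:ℝ)-(n:ℝ)|)) := Real.exp_le_exp.mpr h2
    have habs : |(k:ℝ)-(n:ℝ)| = ((((k:ℤ)-(n:ℤ)).natAbs : ℕ) : ℝ) := by
      rw [Nat.cast_natAbs]
      push_cast
      ring_nf
    have h4 : Real.exp (-(F*X - v + v*|(k:ℝ)-(n:ℝ)|))
        = Real.exp (-(F*X) + v) * q ^ ((k:ℤ)-(n:ℤ)).natAbs := by
      rw [hqdef, ← Real.exp_nat_mul, ← Real.exp_add]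
      congr 1
      rw [habs]
      ring
    rw [h4] at h3
    calc K * Real.exp (-(1/2) * (τ k / b)^2)
        ≤ K * (Real.exp (-(F*X) + v) * q ^ ((k:ℤ)-(n:ℤ)).natAbs) :=
          mul_le_mul_of_nonneg_left h3 hK.le
      _ = (K * Real.exp (-(F*X) + v)) * q ^ ((k:ℤ)-(n:ℤ)).natAbs := by ring
  obtain ⟨hgsum, hgbound⟩ := geom_natAbs_bound q hq0 hq1 n
  have hsummajor : Summable (fun k : ℕ =>
      (K * Real.exp (-(F*X) + v)) * q ^ ((k:ℤ)-(n:ℤ)).natAbs) := hgsum.mul_left _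
  have htermnn : ∀ k : ℕ, 0 ≤ K * Real.exp (-(1/2) * (τ k / b)^2) := fun k => by positivity
  have hsumT : Summable (fun k : ℕ => K * Real.exp (-(1/2) * (τ k / b)^2)) :=
    Summable.of_nonneg_of_le htermnn hterm hsummajor
  set S : ℝ := ∑' k : ℕ, K * Real.exp (-(1/2) * (τ k / b)^2) with hSdef
  have hSnn : 0 ≤ S := tsum_nonneg htermnn
  have hPS : (P {ω | σ < ⨆ s : Set.Icc (0 : ℝ) t,
      (A t ω - A (s : ℝ) ω - (r + μ) * (t - (s : ℝ)))}).toReal ≤ S := by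
    apply ENNReal.toReal_le_of_le_ofReal hSnn
    calc P {ω | σ < ⨆ s : Set.Icc (0 : ℝ) t,
        (A t ω - A (s : ℝ) ω - (r + μ) * (t - (s : ℝ)))}
        ≤ P (⋃ k, E k) := measure_mono hsub
      _ ≤ ∑' k, P (E k) := measure_iUnion_le E
      _ ≤ ∑' k, ENNReal.ofReal (K * Real.exp (-(1/2) * (τ k / b)^2)) := by
          apply ENNReal.tsum_le_tsum
          intro k
          rw [← ENNReal.ofReal_toReal (measure_ne_top P (E k))]
          exact ENNReal.ofReal_le_ofReal (hEbound k)
      _ = ENNReal.ofReal S := (ENNReal.ofReal_tsum_of_nonneg htermnn hsumT).symm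
  have hS2 : S ≤ (K * Real.exp (-(F*X) + v)) * (2/(1-q)) := by
    calc S ≤ ∑' k : ℕ, (K * Real.exp (-(F*X) + v)) * q ^ ((k:ℤ)-(n:ℤ)).natAbs :=
          Summable.tsum_le_tsum hterm hsumT hsummajor
      _ = (K * Real.exp (-(F*X) + v)) * ∑' k : ℕ, (q:ℝ) ^ ((k:ℤ)-(n:ℤ)).natAbs :=
          tsum_mul_left
      _ ≤ (K * Real.exp (-(F*X) + v)) * (2/(1-q)) :=
          mul_le_mul_of_nonneg_left hgbound (by positivity)
  clear_value S
  -- numeric endgame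
  have h1q : 0 < 1 - q := by linarith only [hq1]
  have hgA : 2/(1-q) ≤ 2*Real.exp v/v := by
    have h2 : (v+1)*Real.exp (-v) ≤ 1 := by
      have h3 := mul_le_mul_of_nonneg_right (Real.add_one_le_exp v) (Real.exp_pos (-v)).le
      rw [← Real.exp_add] at h3
      simp only [add_neg_cancel, Real.exp_zero] at h3
      linarith only [h3]
    have hplus : v*Real.exp (-v) ≤ 1 - q := by
      rw [hqdef]
      nlinarith only [h2, Real.exp_pos (-v)]
    have hve : 0 < v*Real.exp (-v) := by positivity
    calc 2/(1-q) ≤ 2/(v*Real.exp (-v)) := by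
          apply div_le_div_of_nonneg_left (by norm_num) hve hplus
      _ = 2*Real.exp v/v := by
          rw [Real.exp_neg]
          field_simp
  have hcomb : K*Real.exp (-(F*X)+v)*(2*Real.exp v/v) = Real.exp (-(F*X)+2*v)*(2*K)/v := by
    have he : Real.exp (-(F*X)+v) * Real.exp v = Real.exp (-(F*X)+2*v) := by
      rw [← Real.exp_add]; congr 1; ring
    calc K*Real.exp (-(F*X)+v)*(2*Real.exp v/v)
        = (Real.exp (-(F*X)+v)*Real.exp v)*(2*K)/v := by ring
      _ = Real.exp (-(F*X)+2*v)*(2*K)/v := by rw [he]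
  have hE1 : Real.exp (-(F*X)+2*v) ≤ 2*(Real.exp 1 * Real.exp (-F) * Real.exp (-X)) := by
    have ha : Real.exp (-(F*X)+2*v) = Real.exp (-(F*X)) * Real.exp (2*v) := by
      rw [← Real.exp_add]
    have hexp2 : Real.exp (2:ℝ) < 8 := by
      have h1 := Real.exp_one_lt_d9
      have h2 : Real.exp (2:ℝ) = Real.exp 1 * Real.exp 1 := by
        rw [← Real.exp_add]; norm_num
      nlinarith only [h1, h2, Real.exp_pos (1:ℝ)]
    have hb1 : Real.exp (2*v) ≤ 2 := by
      have h23 : Real.exp (2*v) ≤ Real.exp ((2:ℝ)/3) :=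
        Real.exp_le_exp.mpr (by linarith only [hv13])
      have hcube : Real.exp ((2:ℝ)/3)^(3:ℕ) = Real.exp 2 := by
        rw [← Real.exp_nat_mul]; norm_num
      have h2lt : Real.exp ((2:ℝ)/3) < 2 := by
        by_contra hcon
        push_neg at hcon
        have h5 := pow_le_pow_left₀ (by norm_num : (0:ℝ) ≤ 2) hcon 3
        rw [hcube] at h5
        norm_num at h5
        linarith only [h5, hexp2]
      linarith only [h23, h2lt]
    have hc1 : Real.exp (-(F*X)) ≤ Real.exp 1 * Real.exp (-F) * Real.exp (-X) := by
      rw [← Real.exp_add, ← Real.exp_add]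
      apply Real.exp_le_exp.mpr
      nlinarith only [hF98, hX1]
    calc Real.exp (-(F*X)+2*v) = Real.exp (-(F*X))*Real.exp (2*v) := ha
      _ ≤ (Real.exp 1 * Real.exp (-F) * Real.exp (-X))*2 :=
          mul_le_mul hc1 hb1 (Real.exp_pos _).le (by positivity)
      _ = 2*(Real.exp 1 * Real.exp (-F) * Real.exp (-X)) := by ring
  have hmaxθ : θ * max H (1-H) = H * (1-H) := by
    rw [hθdef]; exact min_mul_max H (1-H)
  have hmax1 : max H (1-H) ≤ 1 := max_le hH1.le (by linarith only [hH0])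
  have h8 : (8:ℝ) ≤ (4:ℝ)^H * F * Real.exp F := by
    have h4H : (4:ℝ)^H = Real.exp (H * Real.log 4) := by
      rw [Real.rpow_def_of_pos (by norm_num), mul_comm]
    have hlog4 : 4*Real.log (4/3) ≤ Real.log 4 := by
      have h1 : (4:ℝ)*Real.log (4/3) = Real.log (((4:ℝ)/3)^(4:ℕ)) := by
        rw [Real.log_pow]; norm_num
      rw [h1]
      apply Real.log_le_log (by norm_num)
      norm_num
    have hFe : Real.exp (2 - 4*H*Real.log (4/3)) ≤ Real.exp F := Real.exp_le_exp.mpr hFlb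
    have hexp2' : (64:ℝ)/9 ≤ Real.exp 2 := by
      have h1 := Real.exp_one_gt_d9
      have h2 : Real.exp (2:ℝ) = Real.exp 1 * Real.exp 1 := by
        rw [← Real.exp_add]; norm_num
      nlinarith only [h1, h2]
    have hga : (0:ℝ) < Real.exp (H*Real.log 4) := Real.exp_pos _
    have hsplit : Real.exp (2:ℝ) ≤ Real.exp (H*Real.log 4) * Real.exp (2-4*H*Real.log (4/3)) := by
      rw [← Real.exp_add]
      apply Real.exp_le_exp.mpr
      nlinarith only [hlog4, hH0.le]
    calc (8:ℝ) = (9/8)*(64/9) := by norm_num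
      _ ≤ (9/8)*Real.exp 2 := by linarith only [hexp2']
      _ ≤ (9/8)*(Real.exp (H*Real.log 4) * Real.exp (2-4*H*Real.log (4/3))) := by
          linarith only [hsplit]
      _ ≤ (9/8)*(Real.exp (H*Real.log 4) * Real.exp F) := by
          have h6 := mul_le_mul_of_nonneg_left hFe hga.le
          linarith only [h6]
      _ ≤ F*(Real.exp (H*Real.log 4) * Real.exp F) :=
          mul_le_mul_of_nonneg_right hF98 (by positivity)
      _ = (4:ℝ)^H * F * Real.exp F := by rw [h4H]; ring
  have h8F : 8*Real.exp (-F) ≤ (4:ℝ)^H*F := by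
    have h := mul_le_mul_of_nonneg_right h8 (Real.exp_pos (-F)).le
    have h2 : (4:ℝ)^H*F*Real.exp F*Real.exp (-F) = (4:ℝ)^H*F := by
      rw [mul_assoc, ← Real.exp_add]
      simp
    rw [h2] at h
    exact h
  have hkeycoef : 8*Real.exp (-F)*(H*(1-H)) ≤ (4:ℝ)^H*F*θ := by
    calc 8*Real.exp (-F)*(H*(1-H)) = (8*Real.exp (-F))*(θ*max H (1-H)) := by rw [hmaxθ]
      _ ≤ ((4:ℝ)^H*F)*(θ*1) := by
          apply mul_le_mul h8F (mul_le_mul_of_nonneg_left hmax1 hθpos.le)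
            (by positivity) (by positivity)
      _ = (4:ℝ)^H*F*θ := by ring
  have hfinal : (K * Real.exp (-(F*X) + v)) * (2/(1-q)) ≤ Real.exp 1 * M * Real.exp (-X) := by
    calc (K * Real.exp (-(F*X) + v)) * (2/(1-q))
        ≤ (K * Real.exp (-(F*X) + v)) * (2*Real.exp v/v) :=
          mul_le_mul_of_nonneg_left hgA (by positivity)
      _ = Real.exp (-(F*X)+2*v)*(2*K)/v := hcomb
      _ ≤ (2*(Real.exp 1 * Real.exp (-F) * Real.exp (-X)))*(2*K)/v := by
          gcongr
      _ ≤ Real.exp 1 * M * Real.exp (-X) := by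
          rw [show Real.exp 1 * M * Real.exp (-X)
              = (Real.exp 1 * ((4:ℝ)^H*K*C) * Real.exp (-X))/(H*(1-H)) from by
            rw [hMdef]; ring]
          rw [div_le_div_iff₀ hvpos (by positivity)]
          have hBv : (Real.exp 1 * ((4:ℝ)^H*K*C) * Real.exp (-X)) * v
              = (K*Real.exp 1*Real.exp (-X)/2)*((4:ℝ)^H*F*θ) := by
            rw [hvdef]
            field_simp
          rw [hBv]
          have hmul := mul_le_mul_of_nonneg_left hkeycoef
            (show (0:ℝ) ≤ K*Real.exp 1*Real.exp (-X)/2 by positivity)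
          linear_combination hmul
  have hMle : Real.exp 1 * M * Real.exp (-X) ≤ (Real.exp 1 * max 1 M) * Real.exp (-X) := by
    have h1 : M ≤ max 1 M := le_max_right _ _
    have h2 := mul_le_mul_of_nonneg_left h1 (Real.exp_pos 1).le
    exact mul_le_mul_of_nonneg_right h2 (Real.exp_pos (-X)).le
  calc (P {ω | σ < ⨆ s : Set.Icc (0 : ℝ) t,
      (A t ω - A (s : ℝ) ω - (r + μ) * (t - (s : ℝ)))}).toReal
      ≤ S := hPS
    _ ≤ (K * Real.exp (-(F*X) + v)) * (2/(1-q)) := hS2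
    _ ≤ Real.exp 1 * M * Real.exp (-X) := hfinal
    _ ≤ (Real.exp 1 * max 1 M) * Real.exp (-X) := hMle
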